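/- Let a > 0 and let k : [0, ∞) → ℝ be continuous with k(s) ≤ −a² for all s, let F be the solution of F'' + kF = 0 with F(0) = 0, F'(0) = 1, and define g(r) = exp(−∫ᵣ^∞ dt/F(t)) for r > 0. Then g is twice differentiable on (0, ∞) with g''(r) = g(r)·(1 − F'(r))/F(r)², and g''(r) ≤ 0 for all r > 0, i.e. g is concave on (0, ∞). -/

import Mathlib

open Set Real Filter Topology MeasureTheory

/-- Concavity of `g(r) = exp(-∫ᵣ^∞ dt/F(t))` from Lemma 5: `g` is twice differentiable
on `(0,∞)` with `g''(r) = g(r)(1 - F'(r))/F(r)² ≤ 0`, so `g` is concave on `(0,∞)`. -/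
theorem stmt_13 (a : ℝ) (ha : 0 < a) (k F F' F'' : ℝ → ℝ)
    (hk_cont : ContinuousOn k (Set.Ici 0))
    (hk_le : ∀ s ∈ Set.Ici (0 : ℝ), k s ≤ -a ^ 2)
    (hF' : ∀ s ∈ Set.Ici (0 : ℝ), HasDerivWithinAt F (F' s) (Set.Ici 0) s)
    (hF'' : ∀ s ∈ Set.Ici (0 : ℝ), HasDerivWithinAt F' (F'' s) (Set.Ici 0) s)
    (hF''_cont : ContinuousOn F'' (Set.Ici 0))
    (hODE : ∀ s ∈ Set.Ici (0 : ℝ), F'' s + k s * F s = 0)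
    (hF0 : F 0 = 0) (hF'0 : F' 0 = 1)
    (g : ℝ → ℝ) (hg : ∀ r > (0 : ℝ), g r = Real.exp (-∫ t in Set.Ioi r, 1 / F t)) :
    (∀ r > (0 : ℝ), HasDerivAt g (g r / F r) r ∧
      HasDerivAt (fun x => g x / F x) (g r * (1 - F' r) / (F r) ^ 2) r ∧
      g r * (1 - F' r) / (F r) ^ 2 ≤ 0) ∧
      ConcaveOn ℝ (Set.Ioi 0) g := by
  have hFc : ContinuousOn F (Set.Ici 0) := fun s hs => (hF' s hs).continuousWithinAt
  have hF'c : ContinuousOn F' (Set.Ici 0) := fun s hs => (hF'' s hs).continuousWithinAt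
  have hF''eq : ∀ s ∈ Set.Ici (0 : ℝ), F'' s = -k s * F s := by
    intro s hs; have := hODE s hs; linarith
  -- Step A: F ≥ 0 on [0, ∞)
  have key1 : ∀ x : ℝ, 0 ≤ x → ∀ t ∈ Set.Icc 0 x, 0 ≤ F t := by
    intro x hx
    set S : Set ℝ := {s | s ∈ Set.Icc 0 x ∧ ∀ t ∈ Set.Icc 0 s, 0 ≤ F t} with hSdef
    have h0S : (0 : ℝ) ∈ S := by
      refine ⟨⟨le_refl 0, hx⟩, ?_⟩
      intro t ht
      have : t = 0 := le_antisymm ht.2 ht.1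
      simp [this, hF0]
    have hSne : S.Nonempty := ⟨0, h0S⟩
    have hSbdd : BddAbove S := ⟨x, fun s hs => hs.1.2⟩
    set z := sSup S with hzdef
    have hz0 : 0 ≤ z := le_csSup hSbdd h0S
    have hzx : z ≤ x := csSup_le hSne fun s hs => hs.1.2
    -- F ≥ 0 strictly below z
    have hlt : ∀ t, 0 ≤ t → t < z → 0 ≤ F t := by
      intro t ht0 htz
      obtain ⟨s, hsS, hts⟩ := exists_lt_of_lt_csSup hSne htz
      exact hsS.2 t ⟨ht0, le_of_lt hts⟩
    -- F ≥ 0 on [0, z]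
    have hz : ∀ t ∈ Set.Icc 0 z, 0 ≤ F t := by
      intro t ht
      rcases lt_or_eq_of_le ht.2 with h | h
      · exact hlt t ht.1 h
      · rw [h]
        rcases eq_or_lt_of_le hz0 with h0 | h0
        · simp [← h0, hF0]
        · -- t = z > 0; use continuity from the left
          have hcl : z ∈ closure (Set.Ioo 0 z) := by
            rw [closure_Ioo (ne_of_lt h0)]
            exact ⟨le_of_lt h0, le_refl z⟩
          haveI : (𝓝[Set.Ioo 0 z] z).NeBot := mem_closure_iff_nhdsWithin_neBot.mp hcl
          have htend : Filter.Tendsto F (𝓝[Set.Ioo 0 z] z) (𝓝 (F z)) :=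
            (hFc z (le_of_lt h0)).mono_left
              (nhdsWithin_mono _ (fun u hu => le_of_lt hu.1))
          refine ge_of_tendsto htend ?_
          filter_upwards [self_mem_nhdsWithin] with u hu
          exact hlt u (le_of_lt hu.1) hu.2
    -- F' ≥ 1 on [0, z]
    have hF'mono : MonotoneOn F' (Set.Icc 0 z) := by
      refine monotoneOn_of_hasDerivWithinAt_nonneg (convex_Icc 0 z)
        (hF'c.mono (fun t ht => ht.1)) (f' := F'') (fun t ht => ?_) (fun t ht => ?_)
      · rw [interior_Icc] at ht ⊢
        exact (hF'' t (le_of_lt ht.1)).mono (fun u hu => le_of_lt hu.1)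
      · rw [interior_Icc] at ht
        rw [hF''eq t (le_of_lt ht.1)]
        have hkt : a ^ 2 ≤ -k t := by linarith [hk_le t (le_of_lt ht.1)]
        have hFt : 0 ≤ F t := hlt t (le_of_lt ht.1) ht.2
        nlinarith [sq_nonneg a]
    have hF'z : 1 ≤ F' z := by
      have := hF'mono ⟨le_refl 0, hz0⟩ ⟨hz0, le_refl z⟩ hz0
      rwa [hF'0] at this
    -- claim z = x
    have hzx' : z = x := by
      by_contra hne
      have hzltx : z < x := lt_of_le_of_ne hzx hne
      -- F' > 0 near z
      have hF'pos : (0 : ℝ) < F' z := lt_of_lt_of_le one_pos hF'z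
      have hev : ∀ᶠ t in 𝓝[Set.Ici 0] z, 0 < F' t :=
        (hF'c z hz0).eventually (eventually_gt_nhds hF'pos)
      obtain ⟨ε, hε, hball⟩ := Metric.mem_nhdsWithin_iff.mp hev
      set w := min x (z + ε / 2) with hwdef
      have hzw : z < w := lt_min hzltx (by linarith)
      have hwx : w ≤ x := min_le_left _ _
      -- F monotone on [z, w]
      have hmono : MonotoneOn F (Set.Icc z w) := by
        refine monotoneOn_of_hasDerivWithinAt_nonneg (convex_Icc z w)
          (hFc.mono (fun t ht => le_trans hz0 ht.1)) (f' := F') (fun t ht => ?_) (fun t ht => ?_)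
        · rw [interior_Icc] at ht ⊢
          exact (hF' t (le_trans hz0 (le_of_lt ht.1))).mono
            (fun u hu => le_trans hz0 (le_of_lt hu.1))
        · rw [interior_Icc] at ht
          have h1 : dist t z < ε := by
            rw [Real.dist_eq, abs_of_nonneg (by linarith [ht.1])]
            have : w ≤ z + ε / 2 := min_le_right _ _
            linarith [ht.2]
          exact le_of_lt (hball ⟨Metric.mem_ball.mpr h1, le_trans hz0 (le_of_lt ht.1)⟩)
      have hwS : w ∈ S := by
        refine ⟨⟨le_trans hz0 (le_of_lt hzw), hwx⟩, ?_⟩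
        intro t ht
        rcases le_total t z with h | h
        · exact hz t ⟨ht.1, h⟩
        · have : F z ≤ F t :=
            hmono ⟨le_refl z, le_of_lt hzw⟩ ⟨h, ht.2⟩ h
          have hz0' : 0 ≤ F z := hz z ⟨hz0, le_refl z⟩
          linarith
      have : w ≤ z := le_csSup hSbdd hwS
      linarith
    rw [← hzx']
    exact hz
  have hFnn : ∀ s ∈ Set.Ici (0 : ℝ), 0 ≤ F s := fun s hs =>
    key1 s hs s ⟨hs, le_refl s⟩
  -- F' ≥ 1 on [0, ∞)
  have hF'mono : MonotoneOn F' (Set.Ici 0) := by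
    refine monotoneOn_of_hasDerivWithinAt_nonneg (convex_Ici 0) hF'c (f' := F'')
      (fun t ht => ?_) (fun t ht => ?_)
    · rw [interior_Ici] at ht ⊢
      exact (hF'' t (le_of_lt (Set.mem_Ioi.mp ht))).mono (fun u hu => le_of_lt (Set.mem_Ioi.mp hu))
    · rw [interior_Ici] at ht
      rw [hF''eq t (le_of_lt (Set.mem_Ioi.mp ht))]
      have hkt : a ^ 2 ≤ -k t := by linarith [hk_le t (le_of_lt (Set.mem_Ioi.mp ht))]
      have hFt : 0 ≤ F t := hFnn t (le_of_lt (Set.mem_Ioi.mp ht))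
      nlinarith [sq_nonneg a]
  have hF'ge : ∀ s ∈ Set.Ici (0 : ℝ), 1 ≤ F' s := by
    intro s hs
    have := hF'mono (Set.mem_Ici.mpr (le_refl 0)) hs hs
    rwa [hF'0] at this
  -- F s ≥ s
  have hFge : ∀ s ∈ Set.Ici (0 : ℝ), s ≤ F s := by
    have hmono : MonotoneOn (fun t => F t - t) (Set.Ici 0) := by
      refine monotoneOn_of_hasDerivWithinAt_nonneg (convex_Ici 0)
        (hFc.sub continuous_id.continuousOn) (f' := fun t => F' t - 1)
        (fun t ht => ?_) (fun t ht => ?_)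
      · rw [interior_Ici] at ht ⊢
        exact ((hF' t (le_of_lt (Set.mem_Ioi.mp ht))).mono (fun u hu => le_of_lt (Set.mem_Ioi.mp hu))).sub
          (hasDerivWithinAt_id t _)
      · rw [interior_Ici] at ht
        show (0:ℝ) ≤ F' t - 1
        linarith [hF'ge t (le_of_lt (Set.mem_Ioi.mp ht))]
    intro s hs
    have := hmono (Set.mem_Ici.mpr (le_refl 0)) hs hs
    simp only [hF0] at this
    linarith
  have hFpos : ∀ s : ℝ, 0 < s → 0 < F s := fun s hs =>
    lt_of_lt_of_le hs (hFge s (le_of_lt hs))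
  -- Step B: exponential growth. W = (F' - aF)·exp(a·) is monotone, W 0 = 1.
  have hWmono : MonotoneOn (fun t => (F' t - a * F t) * Real.exp (a * t)) (Set.Ici 0) := by
    refine monotoneOn_of_hasDerivWithinAt_nonneg (convex_Ici 0)
      (((hF'c.sub (continuousOn_const.mul hFc)).mul
        ((Real.continuous_exp.comp (continuous_const.mul continuous_id)).continuousOn)))
      (f' := fun t => (F'' t - a ^ 2 * F t) * Real.exp (a * t))
      (fun t ht => ?_) (fun t ht => ?_)
    · rw [interior_Ici] at ht ⊢
      have hE : HasDerivAt (fun u => Real.exp (a * u)) (Real.exp (a * t) * a) t := by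
        simpa using (((hasDerivAt_id t).const_mul a).exp)
      have hD : HasDerivWithinAt (fun u => (F' u - a * F u) * Real.exp (a * u))
          ((F'' t - a * F' t) * Real.exp (a * t)
            + (F' t - a * F t) * (Real.exp (a * t) * a)) (Set.Ioi 0) t := by
        refine HasDerivWithinAt.mul ?_ (hE.hasDerivWithinAt)
        exact ((hF'' t (le_of_lt (Set.mem_Ioi.mp ht))).sub ((hF' t (le_of_lt (Set.mem_Ioi.mp ht))).const_mul a)).mono
          (fun u hu => le_of_lt (Set.mem_Ioi.mp hu))
      convert hD using 1
      ring
    · rw [interior_Ici] at ht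
      have h1 : 0 ≤ F'' t - a ^ 2 * F t := by
        rw [hF''eq t (le_of_lt (Set.mem_Ioi.mp ht))]
        have hkt : a ^ 2 ≤ -k t := by linarith [hk_le t (le_of_lt (Set.mem_Ioi.mp ht))]
        have hFt : 0 ≤ F t := hFnn t (le_of_lt (Set.mem_Ioi.mp ht))
        nlinarith
      exact mul_nonneg h1 (le_of_lt (Real.exp_pos _))
  have hW1 : ∀ t ∈ Set.Ici (0 : ℝ), (1 : ℝ) ≤ (F' t - a * F t) * Real.exp (a * t) := by
    intro t ht
    have := hWmono (Set.mem_Ici.mpr (le_refl 0)) ht ht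
    simpa [hF0, hF'0] using this
  have hW0 : ∀ t ∈ Set.Ici (0 : ℝ), 0 ≤ F' t - a * F t := by
    intro t ht
    have h1 := hW1 t ht
    nlinarith [Real.exp_pos (a * t)]
  -- q = F·exp(-a·) is monotone on [0,∞)
  have hqmono : MonotoneOn (fun t => F t * Real.exp (-(a * t))) (Set.Ici 0) := by
    refine monotoneOn_of_hasDerivWithinAt_nonneg (convex_Ici 0)
      (hFc.mul ((Real.continuous_exp.comp (continuous_const.mul continuous_id).neg).continuousOn))
      (f' := fun t => (F' t - a * F t) * Real.exp (-(a * t)))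
      (fun t ht => ?_) (fun t ht => ?_)
    · rw [interior_Ici] at ht ⊢
      have hE : HasDerivAt (fun u => Real.exp (-(a * u))) (Real.exp (-(a * t)) * (-a)) t := by
        simpa using ((((hasDerivAt_id t).const_mul a).neg).exp)
      have hD : HasDerivWithinAt (fun u => F u * Real.exp (-(a * u)))
          (F' t * Real.exp (-(a * t)) + F t * (Real.exp (-(a * t)) * (-a))) (Set.Ioi 0) t := by
        refine HasDerivWithinAt.mul ?_ hE.hasDerivWithinAt
        exact (hF' t (le_of_lt (Set.mem_Ioi.mp ht))).mono (fun u hu => le_of_lt (Set.mem_Ioi.mp hu))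
      convert hD using 1
      ring
    · rw [interior_Ici] at ht
      exact mul_nonneg (hW0 t (le_of_lt (Set.mem_Ioi.mp ht))) (le_of_lt (Real.exp_pos _))
  -- continuity of 1/F on (0,∞)
  have hinv_cont : ContinuousOn (fun t => 1 / F t) (Set.Ioi 0) :=
    continuousOn_const.div (hFc.mono (fun t ht => le_of_lt (Set.mem_Ioi.mp ht)))
      (fun t ht => ne_of_gt (hFpos t ht))
  -- Step C: integrability of 1/F on (r, ∞)
  have hint : ∀ r : ℝ, 0 < r → IntegrableOn (fun t => 1 / F t) (Set.Ioi r) := by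
    intro r hr
    have hmaj : IntegrableOn
        (fun t => (Real.exp (a * r) / F r) * Real.exp (-a * t)) (Set.Ioi r) := by
      exact (exp_neg_integrableOn_Ioi r ha).const_mul _
    refine Integrable.mono' hmaj
      ((hinv_cont.mono (fun t ht => lt_trans hr (Set.mem_Ioi.mp ht))).aestronglyMeasurable measurableSet_Ioi) ?_
    rw [ae_restrict_iff' measurableSet_Ioi]
    refine ae_of_all _ fun t ht => ?_
    have hrt : r ≤ t := le_of_lt (Set.mem_Ioi.mp ht)
    have hFr : 0 < F r := hFpos r hr
    have hFt : 0 < F t := hFpos t (lt_trans hr (Set.mem_Ioi.mp ht))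
    have hgrow := hqmono (Set.mem_Ici.mpr (le_of_lt hr)) (Set.mem_Ici.mpr (le_trans (le_of_lt hr) hrt)) hrt
    -- F r * exp(-(a r)) ≤ F t * exp(-(a t))
    have hbound : 1 / F t ≤ Real.exp (a * r) / F r * Real.exp (-a * t) := by
      have h2 : F r ≤ F t * Real.exp (-(a * t)) * Real.exp (a * r) := by
        have h3 := mul_le_mul_of_nonneg_right hgrow (le_of_lt (Real.exp_pos (a * r)))
        rwa [mul_assoc, ← Real.exp_add, neg_add_cancel, Real.exp_zero, mul_one] at h3
      rw [div_mul_eq_mul_div, div_le_div_iff₀ hFt hFr, one_mul, neg_mul]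
      rw [show Real.exp (a * r) * Real.exp (-(a * t)) * F t
          = F t * Real.exp (-(a * t)) * Real.exp (a * r) by ring]
      exact h2

    rw [Real.norm_eq_abs, abs_of_nonneg (by positivity)]
    exact hbound
  -- positivity of g
  have hgpos : ∀ r : ℝ, 0 < r → 0 < g r := by
    intro r hr; rw [hg r hr]; exact Real.exp_pos _
  -- Step D/E: derivative of g
  have claim1 : ∀ r : ℝ, 0 < r → HasDerivAt g (g r / F r) r := by
    intro r hr
    set φ : ℝ → ℝ := fun x => ∫ t in Set.Ioi x, 1 / F t with hφdef
    set r₀ : ℝ := r / 2 with hr₀def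
    have hr₀pos : 0 < r₀ := by positivity
    have hr₀r : r₀ < r := by rw [hr₀def]; linarith
    have hsplit : ∀ x ∈ Set.Ioi r₀, φ x = φ r₀ - ∫ t in r₀..x, 1 / F t := by
      intro x hx
      have hx' : r₀ ≤ x := le_of_lt hx
      have hu : Set.Ioc r₀ x ∪ Set.Ioi x = Set.Ioi r₀ := Set.Ioc_union_Ioi_eq_Ioi hx'
      have hdisj : Disjoint (Set.Ioc r₀ x) (Set.Ioi x) := by
        apply Set.disjoint_left.mpr
        intro t ht ht'
        exact absurd ht' (not_lt.mpr ht.2)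
      have hi1 : IntegrableOn (fun t => 1 / F t) (Set.Ioc r₀ x) :=
        (hint r₀ hr₀pos).mono_set Set.Ioc_subset_Ioi_self
      have hi2 : IntegrableOn (fun t => 1 / F t) (Set.Ioi x) := hint x (lt_trans hr₀pos (Set.mem_Ioi.mp hx))
      have hsum := MeasureTheory.setIntegral_union hdisj measurableSet_Ioi hi1 hi2
      rw [hu] at hsum
      rw [hφdef]
      simp only []
      rw [intervalIntegral.integral_of_le hx']
      linarith [hsum]
    have hconr : ContinuousAt (fun t => 1 / F t) r :=
      hinv_cont.continuousAt (Ioi_mem_nhds hr)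
    have hmeas : StronglyMeasurableAtFilter (fun t => 1 / F t) (𝓝 r) volume :=
      ContinuousOn.stronglyMeasurableAtFilter isOpen_Ioi hinv_cont r hr
    have hii : IntervalIntegrable (fun t => 1 / F t) volume r₀ r := by
      apply ContinuousOn.intervalIntegrable
      apply hinv_cont.mono
      rw [Set.uIcc_of_le (le_of_lt hr₀r)]
      intro t ht
      exact Set.mem_Ioi.mpr (lt_of_lt_of_le hr₀pos ht.1)
    have h1 : HasDerivAt (fun u => ∫ t in r₀..u, 1 / F t) (1 / F r) r :=
      intervalIntegral.integral_hasDerivAt_right hii hmeas hconr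
    have h2 : HasDerivAt (fun x => φ r₀ - ∫ t in r₀..x, 1 / F t) (-(1 / F r)) r := by
      simpa using h1.const_sub (φ r₀)
    have hev : φ =ᶠ[𝓝 r] fun x => φ r₀ - ∫ t in r₀..x, 1 / F t :=
      Filter.eventuallyEq_of_mem (Ioi_mem_nhds hr₀r) hsplit
    have hφd : HasDerivAt φ (-(1 / F r)) r := h2.congr_of_eventuallyEq hev
    have hgev : g =ᶠ[𝓝 r] fun x => Real.exp (-φ x) := by
      filter_upwards [Ioi_mem_nhds hr] with x hx
      exact hg x hx
    have h3 : HasDerivAt (fun x => Real.exp (-φ x)) (Real.exp (-φ r) * (1 / F r)) r := by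
      simpa using hφd.neg.exp
    have h4 : HasDerivAt g (Real.exp (-φ r) * (1 / F r)) r := h3.congr_of_eventuallyEq hgev
    have h5 : Real.exp (-φ r) * (1 / F r) = g r / F r := by
      rw [mul_one_div, hg r hr]
    rwa [h5] at h4
  -- Step F: second derivative
  have claim2 : ∀ r : ℝ, 0 < r →
      HasDerivAt (fun x => g x / F x) (g r * (1 - F' r) / (F r) ^ 2) r := by
    intro r hr
    have hFd : HasDerivAt F (F' r) r :=
      (hF' r (le_of_lt hr)).hasDerivAt (Ici_mem_nhds hr)
    have hFne : F r ≠ 0 := ne_of_gt (hFpos r hr)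
    have hdiv := (claim1 r hr).div hFd hFne
    have hval : g r * (1 - F' r) / F r ^ 2 = (g r / F r * F r - g r * F' r) / F r ^ 2 := by
      rw [div_mul_cancel₀ _ hFne]
      ring
    rw [hval]
    exact hdiv
  have claim3 : ∀ r : ℝ, 0 < r → g r * (1 - F' r) / (F r) ^ 2 ≤ 0 := by
    intro r hr
    apply div_nonpos_of_nonpos_of_nonneg
    · exact mul_nonpos_of_nonneg_of_nonpos (le_of_lt (hgpos r hr))
        (by linarith [hF'ge r (le_of_lt hr)])
    · exact sq_nonneg _
  refine ⟨fun r hr => ⟨claim1 r hr, claim2 r hr, claim3 r hr⟩, ?_⟩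
  refine concaveOn_of_hasDerivWithinAt2_nonpos (convex_Ioi 0)
    (fun x hx => (claim1 x hx).continuousAt.continuousWithinAt)
    (f' := fun x => g x / F x) (f'' := fun x => g x * (1 - F' x) / (F x) ^ 2)
    (fun x hx => ?_) (fun x hx => ?_) (fun x hx => ?_)
  · rw [interior_Ioi] at hx ⊢
    exact (claim1 x hx).hasDerivWithinAt
  · rw [interior_Ioi] at hx ⊢
    exact (claim2 x hx).hasDerivWithinAt
  · rw [interior_Ioi] at hx
    exact claim3 x hx
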